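/- arXiv:2105.07551 — 2 statements merged into one kernel-verified Lean document; each statement's English description precedes it below -/
import Mathlib

section
/- Let G be a 4-connected planar triangulation and let S be an independent set of vertices of degree at most 6 in G such that, for every u in S with deg(u) in {5, 6}, no two degree-4 neighbors of u are adjacent in G. If S saturates no 4-cycle in G, then for any two distinct vertices u1, u2 in S, the edge sets of the induced subgraphs G[N[u1]] and G[N[u2]] are disjoint. -/
open SimpleGraph

variable {V : Type}

/-- The degree of a vertex, as the cardinality of its neighbour set. -/
noncomputable def vdeg (G : SimpleGraph V) (v : V) : ℕ := (G.neighborSet v).ncard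

/-- A graph is `k`-connected if it has more than `k` vertices and remains connected
whenever fewer than `k` vertices are removed. -/
def KConnected [Fintype V] (k : ℕ) (G : SimpleGraph V) : Prop :=
  k < Fintype.card V ∧
    ∀ S : Finset V, S.card < k → (G.induce ((↑S : Set V)ᶜ)).Connected

/-- `S` is an independent set of vertices. -/
def IndepSet (G : SimpleGraph V) (S : Set V) : Prop :=
  ∀ ⦃a⦄, a ∈ S → ∀ ⦃b⦄, b ∈ S → ¬ G.Adj a b

/-- `H` is a minor of `G` (branch-set definition). -/
def HasMinor {W : Type} (G : SimpleGraph V) (H : SimpleGraph W) : Prop :=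
  ∃ f : W → Set V,
    (∀ w, (f w).Nonempty) ∧
    (∀ w, (G.induce (f w)).Connected) ∧
    (∀ w₁ w₂, w₁ ≠ w₂ → Disjoint (f w₁) (f w₂)) ∧
    (∀ w₁ w₂, H.Adj w₁ w₂ → ∃ v₁ ∈ f w₁, ∃ v₂ ∈ f w₂, G.Adj v₁ v₂)

/-- Planarity, via Wagner's characterization: no `K₅` and no `K₃,₃` minor. -/
def IsPlanar (G : SimpleGraph V) : Prop :=
  ¬ HasMinor G (⊤ : SimpleGraph (Fin 5)) ∧
    ¬ HasMinor G (completeBipartiteGraph (Fin 3) (Fin 3))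

/-- Outerplanarity: no `K₄` and no `K₂,₃` minor. -/
def IsOuterplanarGraph {W : Type} (H : SimpleGraph W) : Prop :=
  ¬ HasMinor H (⊤ : SimpleGraph (Fin 4)) ∧
    ¬ HasMinor H (completeBipartiteGraph (Fin 2) (Fin 3))

/-- A planar triangulation: an edge-maximal planar graph on at least 3 vertices,
equivalently a planar graph with `3n - 6` edges. -/
def IsPlanarTriangulation [Fintype V] (G : SimpleGraph V) : Prop :=
  3 ≤ Fintype.card V ∧ IsPlanar G ∧
    (G.edgeSet.ncard : ℤ) = 3 * (Fintype.card V : ℤ) - 6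

/-- `p` is a Hamiltonian path of the subgraph of `G` induced on the vertex set `A`:
a path in `G` whose support is exactly `A`. -/
def IsHamPathOn (G : SimpleGraph V) (A : Set V) {a b : V} (p : G.Walk a b) : Prop :=
  p.IsPath ∧ ∀ x, x ∈ p.support ↔ x ∈ A

/-- There are at least two Hamiltonian paths between `a` and `b` in the subgraph of `G`
induced on the vertex set `A`. -/
def TwoHamPathsOn (G : SimpleGraph V) (A : Set V) (a b : V) : Prop :=
  ∃ p q : G.Walk a b, IsHamPathOn G A p ∧ IsHamPathOn G A q ∧ p ≠ q

/-- The number of (distinct, i.e. with distinct edge sets) Hamiltonian cycles of `G`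
containing all edges of `E₀`. -/
noncomputable def hamCycleCountThrough (G : SimpleGraph V) (E₀ : Set (Sym2 V)) : ℕ :=
  {E : Set (Sym2 V) | ∃ (v : V) (c : G.Walk v v), c.IsCycle ∧ (∀ x, x ∈ c.support) ∧
    (∀ e ∈ E₀, e ∈ c.edges) ∧ E = {e | e ∈ c.edges}}.ncard

/-- The number of Hamiltonian cycles of `G`. -/
noncomputable def hamCycleCount (G : SimpleGraph V) : ℕ := hamCycleCountThrough G ∅

/-- The distance between `x` and `y` in `G` is at least `k`
(every walk from `x` to `y` has length at least `k`). -/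
def DistAtLeast (G : SimpleGraph V) (x y : V) (k : ℕ) : Prop :=
  ∀ p : G.Walk x y, k ≤ p.length

/-- The link `A_u` of a vertex `u` of degree at most 6: if `deg u = 4`, the set of
edges of `G` with both ends in `N(u)`; if `deg u ∈ {5,6}`, the set of edges `e`
incident with `u` such that `G - e` is 4-connected. -/
def link [Fintype V] (G : SimpleGraph V) (u : V) : Set (Sym2 V) :=
  {e | e ∈ G.edgeSet ∧
    ((vdeg G u = 4 ∧ ∀ v ∈ e, v ∈ G.neighborSet u) ∨
     (vdeg G u ≠ 4 ∧ u ∈ e ∧ KConnected 4 (G.deleteEdges {e})))}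

/-- `S` saturates some `k`-cycle of `G`: there is a `k`-cycle `C` with `|S ∩ V(C)| = 2`. -/
def Saturates (G : SimpleGraph V) (S : Set V) (k : ℕ) : Prop :=
  ∃ (v : V) (c : G.Walk v v), c.IsCycle ∧ c.length = k ∧
    (S ∩ {x | x ∈ c.support}).ncard = 2

/-- `S` saturates some diamond-6-cycle of `G`: there is a subgraph of `G` isomorphic to
the diamond-6-cycle (crucial vertices `x i`, `y i`, hub vertices `k i`) such that `S`
contains three of its crucial vertices. -/
def SaturatesDiamond6 (G : SimpleGraph V) (S : Set V) : Prop :=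
  ∃ x y k : Fin 3 → V,
    List.Nodup [x 0, y 0, x 1, y 1, x 2, y 2, k 0, k 1, k 2] ∧
    (∀ i, G.Adj (x i) (y i)) ∧
    (∀ i, G.Adj (x i) (k i) ∧ G.Adj (y i) (k i) ∧
          G.Adj (x i) (k (i + 1)) ∧ G.Adj (y i) (k (i + 1))) ∧
    3 ≤ (S ∩ ({x 0, y 0, x 1, y 1, x 2, y 2} : Set V)).ncard

/-- `G` has a separating triangle: a 3-cycle whose vertex deletion disconnects `G`. -/
def HasSeparatingTriangle (G : SimpleGraph V) : Prop :=
  ∃ a b c : V, G.Adj a b ∧ G.Adj b c ∧ G.Adj a c ∧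
    ¬ (G.induce {v | v ≠ a ∧ v ≠ b ∧ v ≠ c}).Connected

/-- A combinatorial plane graph: a graph together with a type of faces, a distinguished
(outer, i.e. infinite) face, and incidence relations of vertices and edges with faces. -/
structure PlaneGraph (V : Type) where
  graph : SimpleGraph V
  Face : Type
  outer : Face
  vertexOn : V → Face → Prop
  edgeOn : Sym2 V → Face → Prop
  edgeOn_mem : ∀ e f, edgeOn e f → e ∈ graph.edgeSet
  vertexOn_of_edgeOn : ∀ e f, edgeOn e f → ∀ v, v ∈ e → vertexOn v f

/-- A vertex `y` and an edge `e` are cofacial: incident with a common face. -/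
def PlaneGraph.Cofacial (P : PlaneGraph V) (y : V) (e : Sym2 V) : Prop :=
  ∃ f, P.vertexOn y f ∧ P.edgeOn e f

/-- The face `f` is bounded by a triangle. -/
def PlaneGraph.IsTriFace (P : PlaneGraph V) (f : P.Face) : Prop :=
  ∃ a b c : V, a ≠ b ∧ a ≠ c ∧ b ≠ c ∧
    P.graph.Adj a b ∧ P.graph.Adj b c ∧ P.graph.Adj a c ∧
    (∀ v, P.vertexOn v f ↔ v = a ∨ v = b ∨ v = c) ∧
    (∀ e, P.edgeOn e f ↔ e = s(a, b) ∨ e = s(b, c) ∨ e = s(a, c))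

/-- A near triangulation: every face except possibly the outer one is a triangle. -/
def PlaneGraph.IsNearTriangulation (P : PlaneGraph V) : Prop :=
  ∀ f, f ≠ P.outer → P.IsTriFace f

/-- The outer face of `P` is bounded by the 4-cycle `u v w x u`. -/
def PlaneGraph.OuterCycle4 (P : PlaneGraph V) (u v w x : V) : Prop :=
  [u, v, w, x].Nodup ∧
  P.graph.Adj u v ∧ P.graph.Adj v w ∧ P.graph.Adj w x ∧ P.graph.Adj x u ∧
  (∀ y, P.vertexOn y P.outer ↔ y = u ∨ y = v ∨ y = w ∨ y = x) ∧
  (∀ e, P.edgeOn e P.outer ↔ e = s(u, v) ∨ e = s(v, w) ∨ e = s(w, x) ∨ e = s(x, u))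

/-- `H` is a cycle (as a graph): it has a Hamiltonian cycle using all of its edges. -/
def IsCycleGraph {W : Type} (H : SimpleGraph W) : Prop :=
  ∃ (v : W) (c : H.Walk v v), c.IsCycle ∧ (∀ x, x ∈ c.support) ∧
    ∀ e ∈ H.edgeSet, e ∈ c.edges

/-- The subgraph of `G` on the vertex set `B` (kept on the ambient vertex type;
vertices outside `B` become isolated). -/
def restrictTo (G : SimpleGraph V) (B : Set V) : SimpleGraph V where
  Adj a b := a ∈ B ∧ b ∈ B ∧ G.Adj a b
  symm := ⟨fun _ _ h => ⟨h.2.1, h.1, h.2.2.symm⟩⟩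
  loopless := ⟨fun a h => G.loopless.irrefl a h.2.2⟩

/-- The graph obtained from `G` by contracting the set `A` to the single vertex `z`
(with `z ∈ A` serving as the new vertex; the other vertices of `A` become isolated). -/
def contractSetTo (G : SimpleGraph V) (A : Set V) (z : V) : SimpleGraph V :=
  SimpleGraph.fromRel (fun a b =>
    (a ∉ A ∧ b ∉ A ∧ G.Adj a b) ∨
    (a = z ∧ b ∉ A ∧ ∃ w ∈ A, G.Adj w b))

/-- `c` is a separating 4-cycle of `G` and `A` is the vertex set of its interior:
`Vclosure(c) = V(c) ∪ A`. -/
def IsSeparating4CycleWithInside (G : SimpleGraph V) {v : V} (c : G.Walk v v) (A : Set V)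
    : Prop :=
  c.IsCycle ∧ c.length = 4 ∧
  A.Nonempty ∧ (∀ a ∈ A, a ∉ c.support) ∧
  (G.induce A).Connected ∧
  (∀ a ∈ A, ∀ b, G.Adj a b → b ∈ A ∨ b ∈ c.support) ∧
  {x | x ∉ A ∧ x ∉ c.support}.Nonempty

/-- The alternative conclusion of Lemma 4.2 for a graph `H` with relevant vertex set `W`,
outer 4-cycle vertex set `C` and contracted vertex `z`: either (i) for all distinct
`a, b ∈ C`, `H - (C \ {a,b})` has at least two Hamiltonian `a`–`b` paths, or (ii) there are
distinct `a, b ∈ C` for which there is a unique such path `P`, and for every other pair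
`c, d ∈ C` there are at least two Hamiltonian `c`–`d` paths, each avoiding an edge of `P`
incident with `z`. -/
def TwoPathOrUnique (H : SimpleGraph V) (C W : Set V) (z : V) : Prop :=
  (∀ a b : V, a ∈ C → b ∈ C → a ≠ b → TwoHamPathsOn H (W \ (C \ {a, b})) a b) ∨
  (∃ a b : V, a ∈ C ∧ b ∈ C ∧ a ≠ b ∧
    ∃ p : H.Walk a b, IsHamPathOn H (W \ (C \ {a, b})) p ∧
      (∀ q : H.Walk a b, IsHamPathOn H (W \ (C \ {a, b})) q → q = p) ∧
      ∀ c d : V, c ∈ C → d ∈ C → c ≠ d → ({c, d} : Set V) ≠ ({a, b} : Set V) →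
        ∃ q₁ q₂ : H.Walk c d,
          IsHamPathOn H (W \ (C \ {c, d})) q₁ ∧ IsHamPathOn H (W \ (C \ {c, d})) q₂ ∧
          q₁ ≠ q₂ ∧
          (∃ e ∈ p.edges, z ∈ e ∧ e ∉ q₁.edges) ∧ (∃ e ∈ p.edges, z ∈ e ∧ e ∉ q₂.edges))

/-- Chordality: every cycle of length at least 4 has a chord. -/
def Chordal {W : Type} (H : SimpleGraph W) : Prop :=
  ∀ (v : W) (c : H.Walk v v), c.IsCycle → 4 ≤ c.length →
    ∃ a b, a ∈ c.support ∧ b ∈ c.support ∧ H.Adj a b ∧ s(a, b) ∉ c.edges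

/-- Let `G` be a 4-connected planar triangulation and `S` an independent
set of vertices of degree at most 6 such that for every `u ∈ S` of degree 5 or 6, no two
degree-4 neighbours of `u` are adjacent. If `S` saturates no 4-cycle of `G`, then for any
distinct `u₁, u₂ ∈ S`, the edge sets of `G[N[u₁]]` and `G[N[u₂]]` are disjoint. -/
theorem closed_neighbourhood_edge_sets_disjoint
    {V : Type} [Fintype V] (G : SimpleGraph V)
    (hG : IsPlanarTriangulation G) (h4 : KConnected 4 G)
    (S : Set V) (hS : IndepSet G S) (hdeg : ∀ u ∈ S, vdeg G u ≤ 6)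
    (hnbr : ∀ u ∈ S, vdeg G u = 5 ∨ vdeg G u = 6 →
      ∀ v₁ v₂ : V, G.Adj u v₁ → G.Adj u v₂ → vdeg G v₁ = 4 → vdeg G v₂ = 4 →
        ¬ G.Adj v₁ v₂)
    (hsat : ¬ Saturates G S 4)
    (u₁ u₂ : V) (hu₁ : u₁ ∈ S) (hu₂ : u₂ ∈ S) (hne : u₁ ≠ u₂) :
    Disjoint {e | e ∈ G.edgeSet ∧ ∀ v ∈ e, v = u₁ ∨ G.Adj u₁ v}
             {e | e ∈ G.edgeSet ∧ ∀ v ∈ e, v = u₂ ∨ G.Adj u₂ v} := by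
  rw [Set.disjoint_left]
  rintro e ⟨heE, h1⟩ ⟨-, h2⟩
  induction e with
  | h a b =>
    have hab : G.Adj a b := heE
    have hmem : ∀ v : V, v ∈ s(a,b) → (v = u₁ ∨ G.Adj u₁ v) ∧ (v = u₂ ∨ G.Adj u₂ v) :=
      fun v hv => ⟨h1 v hv, h2 v hv⟩
    have hu12 : ¬ G.Adj u₁ u₂ := hS hu₁ hu₂
    have key : ∀ v : V, v ∈ s(a,b) → G.Adj u₁ v ∧ G.Adj u₂ v := by
      intro v hv
      obtain ⟨hv1, hv2⟩ := hmem v hv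
      rcases hv1 with rfl | hv1
      · rcases hv2 with rfl | hv2
        · exact absurd rfl hne
        · exact absurd hv2.symm hu12
      · rcases hv2 with rfl | hv2
        · exact absurd hv1 hu12
        · exact ⟨hv1, hv2⟩
    obtain ⟨h1a, h2a⟩ := key a (by simp)
    obtain ⟨h1b, h2b⟩ := key b (by simp)
    have haS : a ∉ S := fun hA => hS hA hu₁ h1a.symm
    have hbS : b ∉ S := fun hB => hS hB hu₁ h1b.symm
    have hab' : a ≠ b := hab.ne
    have hau1 : a ≠ u₁ := fun h => (h ▸ h1a).ne rfl
    have hau2 : a ≠ u₂ := fun h => (h ▸ h2a).ne rfl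
    have hbu1 : b ≠ u₁ := fun h => (h ▸ h1b).ne rfl
    have hbu2 : b ≠ u₂ := fun h => (h ▸ h2b).ne rfl
    apply hsat
    refine ⟨u₁, Walk.cons h1a (Walk.cons h2a.symm (Walk.cons h2b
      (Walk.cons h1b.symm Walk.nil))), ?_, by simp [Walk.length], ?_⟩
    · constructor
      · constructor
        · rw [Walk.isTrail_def]
          simp only [Walk.edges_cons, Walk.edges_nil, List.nodup_cons, List.mem_cons,
            List.not_mem_nil, or_false, List.nodup_nil, and_true, Sym2.eq, Sym2.rel_iff',
            Prod.mk.injEq, Prod.swap_prod_mk, not_or]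
          refine ⟨⟨?_, ?_, ?_⟩, ⟨?_, ?_⟩, ?_⟩ <;> tauto
        · simp
      · simp only [Walk.support_cons, Walk.support_nil, List.tail_cons, List.nodup_cons,
          List.mem_cons, List.not_mem_nil, or_false, List.nodup_nil, and_true, not_or]
        tauto
    · have : S ∩ {x | x ∈ (Walk.cons h1a (Walk.cons h2a.symm (Walk.cons h2b
        (Walk.cons h1b.symm Walk.nil)))).support} = {u₁, u₂} := by
        ext x
        simp only [Walk.support_cons, Walk.support_nil, Set.mem_inter_iff, Set.mem_setOf_eq,
          List.mem_cons, List.not_mem_nil, or_false, Set.mem_insert_iff, Set.mem_singleton_iff]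
        constructor
        · rintro ⟨hxS, rfl | rfl | rfl | rfl | rfl⟩ <;> tauto
        · rintro (rfl | rfl) <;> simp [hu₁, hu₂]
      rw [this, Set.ncard_pair hne]
end

section
/- Let G be a 4-connected planar triangulation and let S be an independent set of vertices of degree at most 6 in G such that S saturates no 4-cycle in G. Then there exists a subset S' of S of size at least |S|/541 such that S' saturates no 5-cycle in G. -/
open SimpleGraph

variable {V : Type}

attribute [local instance 10] Classical.propDecidable

namespace PF

section infra
variable {V : Type} (G : SimpleGraph V)

def Touches (A B : Set V) : Prop := ∃ a ∈ A, ∃ b ∈ B, G.Adj a b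

variable {G}

lemma Touches.symm {A B : Set V} (h : Touches G A B) : Touches G B A := by
  obtain ⟨a, ha, b, hb, hab⟩ := h; exact ⟨b, hb, a, ha, hab.symm⟩

lemma touches_union_left {A B D : Set V} :
    Touches G (A ∪ B) D ↔ Touches G A D ∨ Touches G B D := by
  constructor
  · rintro ⟨a, (ha | ha), b, hb, hab⟩
    · exact Or.inl ⟨a, ha, b, hb, hab⟩
    · exact Or.inr ⟨a, ha, b, hb, hab⟩
  · rintro (⟨a, ha, b, hb, hab⟩ | ⟨a, ha, b, hb, hab⟩)
    · exact ⟨a, Or.inl ha, b, hb, hab⟩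
    · exact ⟨a, Or.inr ha, b, hb, hab⟩

lemma Touches.mono {A B A' : Set V} (h : Touches G A B) (hA : A ⊆ A') : Touches G A' B := by
  obtain ⟨a, ha, b, hb, hab⟩ := h; exact ⟨a, hA ha, b, hb, hab⟩

/-- A set with a hub vertex is connected. -/
lemma hub_connected {u : V} {A : Set V} (hu : u ∈ A) (h : ∀ a ∈ A, a = u ∨ G.Adj u a) :
    (G.induce A).Connected := by
  rw [connected_iff]
  refine ⟨fun x y => ?_, ⟨⟨u, hu⟩⟩⟩
  have key : ∀ x : A, (G.induce A).Reachable x ⟨u, hu⟩ := by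
    rintro ⟨a, ha⟩
    rcases h a ha with rfl | hadj
    · rfl
    · exact Adj.reachable (by simp [hadj.symm])
  exact (key x).trans (key y).symm

lemma union_conn_of_touch {A B : Set V} (hA : (G.induce A).Connected)
    (hB : (G.induce B).Connected) (h : Touches G A B) :
    (G.induce (A ∪ B)).Connected := by
  obtain ⟨a, ha, b, hb, hab⟩ := h
  have h1 : (G.induce (A ∪ {a, b})).Connected := by
    refine induce_union_connected hA.preconnected (induce_pair_connected_of_adj hab).preconnected ⟨a, ha, by simp⟩
  have h2 : (G.induce ((A ∪ {a, b}) ∪ B)).Connected :=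
    induce_union_connected h1.preconnected hB.preconnected ⟨b, by simp, hb⟩
  have : (A ∪ {a, b}) ∪ B = A ∪ B := by
    apply Set.Subset.antisymm
    · rintro x ((hx | hx) | hx)
      · exact Or.inl hx
      · rcases hx with rfl | rfl
        · exact Or.inl ha
        · exact Or.inr hb
      · exact Or.inr hx
    · rintro x (hx | hx)
      · exact Or.inl (Or.inl hx)
      · exact Or.inr hx
  rwa [this] at h2

variable (G)

def GoodM (M : Finset (Set V)) : Prop :=
  (∀ A ∈ M, (G.induce A).Connected) ∧ (∀ A ∈ M, ∀ B ∈ M, A ≠ B → Disjoint A B)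

noncomputable def dd (M : Finset (Set V)) (A : Set V) : ℕ :=
  ((M.erase A).filter (fun B => Touches G A B)).card

noncomputable def de (M : Finset (Set V)) : ℕ := ∑ A ∈ M, dd G M A

noncomputable def comm (M : Finset (Set V)) (A B : Set V) : ℕ :=
  (((M.erase A).erase B).filter (fun D => Touches G A D ∧ Touches G B D)).card

def CliqueM (n : ℕ) (M : Finset (Set V)) : Prop :=
  ∃ K : Finset (Set V), K.card = n ∧
    (∀ A ∈ K, (G.induce A).Connected) ∧
    (∀ A ∈ K, ∃ P ∈ M, P ⊆ A) ∧
    (∀ A ∈ K, A ⊆ ⋃₀ (↑M : Set (Set V))) ∧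
    (∀ A ∈ K, ∀ B ∈ K, A ≠ B → Disjoint A B ∧ Touches G A B)

variable {G}

lemma GoodM.mono {M N : Finset (Set V)} (h : GoodM G M) (hNM : N ⊆ M) : GoodM G N :=
  ⟨fun A hA => h.1 A (hNM hA), fun A hA B hB hAB => h.2 A (hNM hA) B (hNM hB) hAB⟩

lemma cliqueM_mono {n : ℕ} {M M' : Finset (Set V)}
    (hparts : ∀ P ∈ M', ∃ Q ∈ M, Q ⊆ P)
    (hcar : ⋃₀ (↑M' : Set (Set V)) ⊆ ⋃₀ (↑M : Set (Set V)))
    (h : CliqueM G n M') : CliqueM G n M := by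
  obtain ⟨K, hcard, hconn, hP, hC, hpair⟩ := h
  refine ⟨K, hcard, hconn, fun A hA => ?_, fun A hA => (hC A hA).trans hcar, hpair⟩
  obtain ⟨P, hP', hPA⟩ := hP A hA
  obtain ⟨Q, hQ, hQP⟩ := hparts P hP'
  exact ⟨Q, hQ, hQP.trans hPA⟩


lemma my_erase_comm (M : Finset (Set V)) (A B : Set V) :
    (M.erase A).erase B = (M.erase B).erase A := by
  ext x; simp only [Finset.mem_erase]; tauto

lemma exists_pair_of_de_pos {M : Finset (Set V)} (h : 1 ≤ de G M) :
    ∃ A ∈ M, ∃ B ∈ M, A ≠ B ∧ Touches G A B := by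
  have : ∃ A ∈ M, 1 ≤ dd G M A := by
    by_contra hc
    push_neg at hc
    have h0 : de G M = 0 := Finset.sum_eq_zero (fun A hA => by have := hc A hA; omega)
    omega
  obtain ⟨A, hA, hdd⟩ := this
  rw [dd] at hdd
  obtain ⟨B, hB⟩ := Finset.card_pos.mp hdd
  rw [Finset.mem_filter, Finset.mem_erase] at hB
  exact ⟨A, hA, B, hB.1.2, (Ne.symm hB.1.1), hB.2⟩

lemma dd_erase {M : Finset (Set V)} {A B : Set V} (hA : A ∈ M) (hB : B ∈ M.erase A) :
    dd G (M.erase A) B + (if Touches G B A then 1 else 0) = dd G M B := by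
  have h1 : ((M.erase A).erase B).filter (fun D => Touches G B D)
      = (((M.erase B).filter (fun D => Touches G B D)).erase A) := by
    rw [my_erase_comm, Finset.filter_erase]
  rw [dd, dd, h1]
  rw [Finset.mem_erase] at hB
  by_cases ht : Touches G B A
  · have hmem : A ∈ (M.erase B).filter (fun D => Touches G B D) := by
      rw [Finset.mem_filter, Finset.mem_erase]
      exact ⟨⟨Ne.symm hB.1, hA⟩, ht⟩
    simp only [ht, if_true]
    exact Finset.card_erase_add_one hmem
  · have hmem : A ∉ (M.erase B).filter (fun D => Touches G B D) := by
      rw [Finset.mem_filter]; tauto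
    rw [Finset.erase_eq_of_notMem hmem]
    simp [ht]

lemma de_erase {M : Finset (Set V)} {A : Set V} (hA : A ∈ M) :
    de G (M.erase A) + 2 * dd G M A = de G M := by
  have h1 : ∑ B ∈ M.erase A, (dd G (M.erase A) B + (if Touches G B A then 1 else 0))
      = ∑ B ∈ M.erase A, dd G M B :=
    Finset.sum_congr rfl (fun B hB => dd_erase hA hB)
  rw [Finset.sum_add_distrib] at h1
  have h2 : ∑ B ∈ M.erase A, (if Touches G B A then 1 else 0)
      = ((M.erase A).filter (fun B => Touches G B A)).card := by
    rw [Finset.card_filter]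
  have h3 : ((M.erase A).filter (fun B => Touches G B A)).card = dd G M A := by
    rw [dd]
    congr 1
    apply Finset.filter_congr
    intro B _
    constructor
    · exact fun h => h.symm
    · exact fun h => h.symm
  have h4 : ∑ B ∈ M.erase A, dd G M B + dd G M A = de G M := Finset.sum_erase_add M _ hA
  rw [h2, h3] at h1
  have h5 : de G (M.erase A) + dd G M A = ∑ B ∈ M.erase A, dd G M B := h1
  omega


lemma merge_card {M : Finset (Set V)} {A B : Set V} (hA : A ∈ M) (hB : B ∈ M) (hAB : A ≠ B)
    (hER : (A ∪ B) ∉ (M.erase A).erase B) :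
    (insert (A ∪ B) ((M.erase A).erase B)).card + 1 = M.card := by
  have hB' : B ∈ M.erase A := Finset.mem_erase.mpr ⟨Ne.symm hAB, hB⟩
  have h1 : ((M.erase A).erase B).card + 1 = (M.erase A).card := Finset.card_erase_add_one hB'
  have h2 : (M.erase A).card + 1 = M.card := Finset.card_erase_add_one hA
  rw [Finset.card_insert_of_notMem hER]
  omega

lemma de_merge {M : Finset (Set V)} {A B : Set V} (hA : A ∈ M) (hB : B ∈ M) (hAB : A ≠ B)
    (hT : Touches G A B) (hER : (A ∪ B) ∉ (M.erase A).erase B) :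
    de G (insert (A ∪ B) ((M.erase A).erase B)) + 2 * comm G M A B + 2 = de G M := by
  set R := (M.erase A).erase B with hR
  set E := A ∪ B with hE
  set P := R.filter (fun D => Touches G A D) with hPdef
  set Q := R.filter (fun D => Touches G B D) with hQdef
  have hB' : B ∈ M.erase A := Finset.mem_erase.mpr ⟨Ne.symm hAB, hB⟩
  have hA' : A ∈ M.erase B := Finset.mem_erase.mpr ⟨hAB, hA⟩
  have hfilterPQ : ∀ s : Finset (Set V), s.filter (fun D => Touches G E D)
      = s.filter (fun D => Touches G A D) ∪ s.filter (fun D => Touches G B D) := by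
    intro s
    rw [← Finset.filter_or]
    apply Finset.filter_congr
    intro D _
    simp only [hE, touches_union_left]
  have h_ddE : dd G (insert E R) E = (P ∪ Q).card := by
    rw [dd, Finset.erase_insert hER, hfilterPQ R]
  have h_PQ : (P ∪ Q).card + (P ∩ Q).card = P.card + Q.card := Finset.card_union_add_card_inter _ _
  have h_comm : (P ∩ Q).card = comm G M A B := by
    rw [comm, ← hR, hPdef, hQdef, ← Finset.filter_and]
  have h_P : P.card + 1 = dd G M A := by
    rw [hPdef, hR, Finset.filter_erase, dd]
    apply Finset.card_erase_add_one
    rw [Finset.mem_filter]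
    exact ⟨hB', hT⟩
  have h_Q : Q.card + 1 = dd G M B := by
    rw [hQdef, hR, my_erase_comm, Finset.filter_erase, dd]
    apply Finset.card_erase_add_one
    rw [Finset.mem_filter]
    exact ⟨hA', hT.symm⟩
  have h_point : ∀ D ∈ R, dd G (insert E R) D = dd G R D + (if Touches G D E then 1 else 0) := by
    intro D hD
    have hED : E ≠ D := fun h => hER (h ▸ hD)
    rw [dd, Finset.erase_insert_of_ne hED, Finset.filter_insert]
    by_cases ht : Touches G D E
    · rw [if_pos ht, Finset.card_insert_of_notMem, dd, if_pos ht]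
      intro hmem
      exact hER (Finset.mem_of_mem_erase (Finset.mem_of_mem_filter _ hmem))
    · rw [if_neg ht, dd, if_neg ht]
      omega
  have h_sum : ∑ D ∈ R, dd G (insert E R) D = de G R + (P ∪ Q).card := by
    have : ∑ D ∈ R, dd G (insert E R) D
        = ∑ D ∈ R, (dd G R D + (if Touches G D E then 1 else 0)) :=
      Finset.sum_congr rfl h_point
    rw [this, Finset.sum_add_distrib, ← Finset.card_filter]
    have hsymmfil : R.filter (fun D => Touches G D E) = R.filter (fun D => Touches G E D) :=
      Finset.filter_congr (fun D _ => ⟨fun h => h.symm, fun h => h.symm⟩)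
    rw [hsymmfil, hfilterPQ R, ← hPdef, ← hQdef, ← de]
  have h_de_insert : de G (insert E R) = dd G (insert E R) E + ∑ D ∈ R, dd G (insert E R) D := by
    rw [de, Finset.sum_insert hER]
  have h_deR : de G R + 2 * dd G (M.erase A) B = de G (M.erase A) := de_erase hB'
  have h_deA : de G (M.erase A) + 2 * dd G M A = de G M := de_erase hA
  have h_ddB : dd G (M.erase A) B + 1 = dd G M B := by
    have := dd_erase (G := G) hA hB'
    rw [if_pos hT.symm] at this
    omega
  rw [h_de_insert, h_ddE, h_sum]
  omega


theorem mader (m : ℕ) : ∀ M : Finset (Set V), GoodM G M → 1 ≤ M.card →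
    2 ^ m * M.card ≤ de G M → CliqueM G (m + 2) M := by
  induction m with
  | zero =>
    intro M hgood hcard hde
    have hde1 : 1 ≤ de G M := le_trans (by simpa using hcard) hde
    obtain ⟨A, hA, B, hB, hAB, hT⟩ := exists_pair_of_de_pos hde1
    refine ⟨{A, B}, ?_, ?_, ?_, ?_, ?_⟩
    · exact Finset.card_pair hAB
    · intro C hC
      rcases Finset.mem_insert.mp hC with rfl | hC
      · exact hgood.1 C hA
      · rw [Finset.mem_singleton] at hC; subst hC; exact hgood.1 C hB
    · intro C hC
      rcases Finset.mem_insert.mp hC with rfl | hC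
      · exact ⟨C, hA, subset_rfl⟩
      · rw [Finset.mem_singleton] at hC; subst hC; exact ⟨C, hB, subset_rfl⟩
    · intro C hC
      rcases Finset.mem_insert.mp hC with rfl | hC
      · exact Set.subset_sUnion_of_mem (by exact_mod_cast hA)
      · rw [Finset.mem_singleton] at hC; subst hC
        exact Set.subset_sUnion_of_mem (by exact_mod_cast hB)
    · intro C hC D hD hCD
      have hmem : ∀ X, X ∈ ({A, B} : Finset (Set V)) → X = A ∨ X = B := by
        intro X hX; simpa using hX
      rcases hmem C hC with rfl | rfl <;> rcases hmem D hD with rfl | rfl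
      · exact absurd rfl hCD
      · exact ⟨hgood.2 _ hA _ hB hCD, hT⟩
      · exact ⟨hgood.2 _ hB _ hA hCD, hT.symm⟩
      · exact absurd rfl hCD
  | succ m ih =>
    suffices H : ∀ n : ℕ, ∀ M : Finset (Set V), M.card = n → GoodM G M → 1 ≤ M.card →
        2 ^ (m + 1) * M.card ≤ de G M → CliqueM G (m + 1 + 2) M by
      exact fun M h1 h2 h3 => H M.card M rfl h1 h2 h3
    intro n
    induction n using Nat.strong_induction_on with
    | _ n IH =>
      rintro M rfl hgood hcard hde
      set c := 2 ^ m with hc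
      have hc1 : 1 ≤ c := Nat.one_le_two_pow
      have h2c : 2 ^ (m + 1) = 2 * c := by rw [hc, pow_succ]; ring
      rw [h2c] at hde
      have hde1 : 1 ≤ de G M := le_trans (by nlinarith) hde
      obtain ⟨A₀, hA₀, B₀, hB₀, hAB₀, hT₀⟩ := exists_pair_of_de_pos hde1
      have hcard2 : 2 ≤ M.card := Finset.one_lt_card.mpr ⟨A₀, hA₀, B₀, hB₀, hAB₀⟩
      by_cases hdel : ∃ A ∈ M, dd G M A ≤ c
      · -- delete a low degree part
        obtain ⟨A, hA, hddA⟩ := hdel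
        have hcardE : (M.erase A).card + 1 = M.card := Finset.card_erase_add_one hA
        have hdeE : de G (M.erase A) + 2 * dd G M A = de G M := de_erase hA
        have hmul : 2 * c * ((M.erase A).card + 1) = 2 * c * (M.erase A).card + 2 * c := by ring
        have hde' : 2 * c * (M.erase A).card ≤ de G (M.erase A) := by
          rw [← hcardE] at hde; linarith
        have hres := IH (M.erase A).card (by omega) (M.erase A) rfl
          (hgood.mono (Finset.erase_subset _ _)) (by omega) (by rw [h2c]; exact hde')
        refine cliqueM_mono (fun P hP => ⟨P, Finset.mem_of_mem_erase hP, subset_rfl⟩) ?_ hres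
        exact Set.sUnion_mono (by exact_mod_cast Finset.erase_subset _ _)
      · push_neg at hdel
        by_cases hmerge : ∃ A ∈ M, ∃ B ∈ M, A ≠ B ∧ Touches G A B ∧ comm G M A B < c
        · -- merge two touching parts
          obtain ⟨A, hA, B, hB, hAB, hT, hcm⟩ := hmerge
          have hAne : A.Nonempty := Set.nonempty_coe_sort.mp (hgood.1 A hA).nonempty
          have hER : (A ∪ B) ∉ (M.erase A).erase B := by
            intro h
            have hEM : A ∪ B ∈ M := Finset.mem_of_mem_erase (Finset.mem_of_mem_erase h)
            have hEA : A ∪ B ≠ A := (Finset.mem_erase.mp (Finset.mem_of_mem_erase h)).1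
            have hdisj := hgood.2 (A ∪ B) hEM A hA hEA
            obtain ⟨a, ha⟩ := hAne
            exact Set.disjoint_left.mp hdisj (Or.inl ha) ha
          set M' := insert (A ∪ B) ((M.erase A).erase B) with hM'
          have hcard' : M'.card + 1 = M.card := merge_card hA hB hAB hER
          have hde'' : de G M' + 2 * comm G M A B + 2 = de G M := de_merge hA hB hAB hT hER
          have hcmle : 2 * comm G M A B + 2 ≤ 2 * c := by omega
          have hde' : 2 * c * M'.card ≤ de G M' := by
            have hmul : 2 * c * (M'.card + 1) = 2 * c * M'.card + 2 * c := by ring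
            rw [← hcard'] at hde; linarith
          have hgood' : GoodM G M' := by
            constructor
            · intro C hC
              rcases Finset.mem_insert.mp hC with rfl | hC
              · exact union_conn_of_touch (hgood.1 A hA) (hgood.1 B hB) hT
              · exact hgood.1 C (Finset.mem_of_mem_erase (Finset.mem_of_mem_erase hC))
            · intro C hC D hD hCD
              have hmem : ∀ X ∈ (M.erase A).erase B, X ∈ M ∧ X ≠ A ∧ X ≠ B := by
                intro X hX
                have h1 := Finset.mem_erase.mp hX
                have h2 := Finset.mem_erase.mp h1.2
                exact ⟨h2.2, h2.1, h1.1⟩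
              rcases Finset.mem_insert.mp hC with rfl | hC
              · rcases Finset.mem_insert.mp hD with rfl | hD
                · exact absurd rfl hCD
                · obtain ⟨hDM, hDA, hDB⟩ := hmem D hD
                  exact Set.disjoint_union_left.mpr
                    ⟨(hgood.2 D hDM A hA hDA).symm, (hgood.2 D hDM B hB hDB).symm⟩
              · rcases Finset.mem_insert.mp hD with rfl | hD
                · obtain ⟨hCM, hCA, hCB⟩ := hmem C hC
                  exact (Set.disjoint_union_left.mpr
                    ⟨(hgood.2 C hCM A hA hCA).symm, (hgood.2 C hCM B hB hCB).symm⟩).symm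
                · exact hgood.2 C (hmem C hC).1 D (hmem D hD).1 hCD
          have hres := IH M'.card (by omega) M' rfl hgood' (by omega) (by rw [h2c]; exact hde')
          refine cliqueM_mono ?_ ?_ hres
          · intro P hP
            rcases Finset.mem_insert.mp hP with rfl | hP
            · exact ⟨A, hA, Set.subset_union_left⟩
            · exact ⟨P, Finset.mem_of_mem_erase (Finset.mem_of_mem_erase hP), subset_rfl⟩
          · apply Set.sUnion_subset
            intro X hX
            rw [Finset.coe_insert, Set.mem_insert_iff] at hX
            rcases hX with rfl | hX
            · exact Set.union_subset
                (Set.subset_sUnion_of_mem (by exact_mod_cast hA))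
                (Set.subset_sUnion_of_mem (by exact_mod_cast hB))
            · refine Set.subset_sUnion_of_mem ?_
              have : X ∈ M := Finset.mem_of_mem_erase (Finset.mem_of_mem_erase (by exact_mod_cast hX))
              exact_mod_cast this
        · -- all touching pairs have large common contact; use the neighbourhood of A₀
          push_neg at hmerge
          set N := (M.erase A₀).filter (fun D => Touches G A₀ D) with hN
          have hNsub : N ⊆ M := (Finset.filter_subset _ _).trans (Finset.erase_subset _ _)
          have hNcard : N.card = dd G M A₀ := rfl
          have hNmem : ∀ A ∈ N, A ∈ M ∧ A ≠ A₀ ∧ Touches G A₀ A := by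
            intro A hA
            have h1 := Finset.mem_filter.mp hA
            have h2 := Finset.mem_erase.mp h1.1
            exact ⟨h2.2, h2.1, h1.2⟩
          have hNpos : 1 ≤ N.card := by
            have := hdel A₀ hA₀
            omega
          have hpoint : ∀ A ∈ N, c ≤ dd G N A := by
            intro A hA
            obtain ⟨hAM, hAX, hTXA⟩ := hNmem A hA
            have hcle : c ≤ comm G M A A₀ :=
              hmerge A hAM A₀ hA₀ hAX hTXA.symm
            have hsub : ((M.erase A).erase A₀).filter (fun D => Touches G A D ∧ Touches G A₀ D)
                ⊆ (N.erase A).filter (fun B => Touches G A B) := by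
              intro D hD
              have h1 := Finset.mem_filter.mp hD
              have h2 := Finset.mem_erase.mp h1.1
              have h3 := Finset.mem_erase.mp h2.2
              refine Finset.mem_filter.mpr ⟨Finset.mem_erase.mpr ⟨h3.1, ?_⟩, h1.2.1⟩
              exact Finset.mem_filter.mpr ⟨Finset.mem_erase.mpr ⟨h2.1, h3.2⟩, h1.2.2⟩
            calc c ≤ comm G M A A₀ := hcle
              _ ≤ dd G N A := Finset.card_le_card hsub
          have hdeN : 2 ^ m * N.card ≤ de G N := by
            calc 2 ^ m * N.card = ∑ _A ∈ N, c := by rw [Finset.sum_const, smul_eq_mul, hc]; ring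
              _ ≤ ∑ A ∈ N, dd G N A := Finset.sum_le_sum hpoint
              _ = de G N := rfl
          obtain ⟨K, hKcard, hKconn, hKpart, hKcar, hKpair⟩ :=
            ih N (hgood.mono hNsub) hNpos hdeN
          -- A₀ is disjoint from the carrier of N
          have hXdisj : ∀ D ∈ N, Disjoint A₀ D := by
            intro D hD
            obtain ⟨hDM, hDX, _⟩ := hNmem D hD
            exact hgood.2 A₀ hA₀ D hDM (Ne.symm hDX)
          have hXcar : Disjoint A₀ (⋃₀ (↑N : Set (Set V))) := by
            rw [Set.disjoint_sUnion_right]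
            intro D hD
            exact hXdisj D (by exact_mod_cast hD)
          have hXne : A₀.Nonempty := Set.nonempty_coe_sort.mp (hgood.1 A₀ hA₀).nonempty
          have hXK : A₀ ∉ K := by
            intro hXK
            have h1 : A₀ ⊆ ⋃₀ (↑N : Set (Set V)) := hKcar A₀ hXK
            obtain ⟨a, ha⟩ := hXne
            exact Set.disjoint_left.mp hXcar ha (h1 ha)
          refine ⟨insert A₀ K, ?_, ?_, ?_, ?_, ?_⟩
          · rw [Finset.card_insert_of_notMem hXK, hKcard]
          · intro A hA
            rcases Finset.mem_insert.mp hA with rfl | hA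
            · exact hgood.1 A hA₀
            · exact hKconn A hA
          · intro A hA
            rcases Finset.mem_insert.mp hA with rfl | hA
            · exact ⟨A, hA₀, subset_rfl⟩
            · obtain ⟨P, hP, hPA⟩ := hKpart A hA
              exact ⟨P, hNsub hP, hPA⟩
          · intro A hA
            rcases Finset.mem_insert.mp hA with rfl | hA
            · exact Set.subset_sUnion_of_mem (by exact_mod_cast hA₀)
            · exact (hKcar A hA).trans (Set.sUnion_mono (by exact_mod_cast hNsub))
          · intro A hA' B hB' hAB
            have key : ∀ C ∈ K, Disjoint A₀ C ∧ Touches G A₀ C := by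
              intro C hCK
              constructor
              · exact Set.disjoint_of_subset_right (hKcar C hCK) hXcar
              · obtain ⟨P, hP, hPC⟩ := hKpart C hCK
                exact (((hNmem P hP).2.2.symm).mono hPC).symm
            rcases Finset.mem_insert.mp hA' with hA1 | hA1
            · rcases Finset.mem_insert.mp hB' with hB1 | hB1
              · exact absurd (hA1.trans hB1.symm) hAB
              · rw [hA1]; exact key B hB1
            · rcases Finset.mem_insert.mp hB' with hB1 | hB1
              · rw [hB1]
                obtain ⟨hd, ht⟩ := key A hA1
                exact ⟨hd.symm, ht.symm⟩
              · exact hKpair A hA1 B hB1 hAB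


lemma cliqueM_five_minor {M : Finset (Set V)} (h : CliqueM G 5 M) :
    ∃ f : Fin 5 → Set V,
    (∀ w, (f w).Nonempty) ∧
    (∀ w, (G.induce (f w)).Connected) ∧
    (∀ w₁ w₂, w₁ ≠ w₂ → Disjoint (f w₁) (f w₂)) ∧
    (∀ w₁ w₂, (⊤ : SimpleGraph (Fin 5)).Adj w₁ w₂ → ∃ v₁ ∈ f w₁, ∃ v₂ ∈ f w₂, G.Adj v₁ v₂) := by
  obtain ⟨K, hKcard, hKconn, _, _, hKpair⟩ := h
  let e := K.equivFinOfCardEq hKcard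
  refine ⟨fun i => ((e.symm i : ↥K) : Set V), ?_, ?_, ?_, ?_⟩
  · intro i
    exact Set.nonempty_coe_sort.mp (hKconn _ (e.symm i).2).nonempty
  · intro i
    exact hKconn _ (e.symm i).2
  · intro i j hij
    have hne : ((e.symm i : ↥K) : Set V) ≠ ((e.symm j : ↥K) : Set V) := by
      intro hEq
      exact hij (by simpa using e.symm.injective (Subtype.ext hEq))
    exact (hKpair _ (e.symm i).2 _ (e.symm j).2 hne).1
  · intro i j hadj
    have hij : i ≠ j := by simpa using hadj
    have hne : ((e.symm i : ↥K) : Set V) ≠ ((e.symm j : ↥K) : Set V) := by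
      intro hEq
      exact hij (by simpa using e.symm.injective (Subtype.ext hEq))
    exact (hKpair _ (e.symm i).2 _ (e.symm j).2 hne).2


lemma mem_tail_of_closed {w : V} (c : G.Walk w w) (h : c.length ≠ 0) :
    w ∈ c.support.tail := by
  cases c with
  | nil => simp at h
  | cons h p => simpa using p.end_mem_support

lemma length_rotate' {w u : V} (c : G.Walk w w) (hu : u ∈ c.support) :
    (c.rotate u hu).length = c.length := by
  rw [← Walk.length_edges, ← Walk.length_edges]
  exact (Walk.rotate_edges c u hu).perm.length_eq

lemma five_cycle_struct {u v w : V} (huv : u ≠ v) (hnadj : ¬ G.Adj u v)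
    {c : G.Walk w w} (hc : c.IsCycle) (hlen : c.length = 5)
    (hu : u ∈ c.support) (hv : v ∈ c.support) :
    ∃ x y z : V, G.Adj x u ∧ G.Adj x v ∧ G.Adj u z ∧ G.Adj v y ∧ G.Adj z y ∧ z ≠ x ∧ y ≠ x := by
  have hc' := hc.rotate hu
  have hlen' : (c.rotate u hu).length = 5 := (length_rotate' c hu).trans hlen
  have hv' : v ∈ (c.rotate u hu).support := by
    have hvtail : v ∈ c.support.tail := by
      rcases (Walk.mem_support_iff c).mp hv with rfl | h
      · exact mem_tail_of_closed c (by omega)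
      · exact h
    have := (Walk.support_rotate c u hu).mem_iff.mpr hvtail
    exact List.mem_of_mem_tail this
  set c' := c.rotate u hu with hc'def
  clear_value c'
  clear hc hlen hu hv hc'def
  cases c' with
  | nil => simp at hlen'
  | cons h1 p1 =>
  cases p1 with
  | nil => simp at hlen'
  | cons h2 p2 =>
  cases p2 with
  | nil => simp at hlen'
  | cons h3 p3 =>
  cases p3 with
  | nil => simp at hlen'
  | cons h4 p4 =>
  cases p4 with
  | nil => simp at hlen'
  | cons h5 p5 =>
  cases p5 with
  | cons h6 p6 => simp [Walk.length_cons] at hlen'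
  | nil =>
  rename_i a b d e'
  -- h1 : G.Adj u a, h2 : G.Adj a b, h3 : G.Adj b d, h4 : G.Adj d e', h5 : G.Adj e' u
  have hnodup := hc'.support_nodup
  simp only [Walk.support_cons, Walk.support_nil, List.tail_cons, List.nodup_cons,
    List.mem_cons, List.mem_singleton, List.not_mem_nil, or_false, not_or] at hnodup
  have hvmem : v = a ∨ v = b ∨ v = d ∨ v = e' := by
    simp only [Walk.support_cons, Walk.support_nil, List.mem_cons, List.mem_singleton] at hv'
    rcases hv' with rfl | h
    · exact absurd rfl huv
    · rcases h with rfl | h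
      · exact Or.inl rfl
      · rcases h with rfl | h
        · exact Or.inr (Or.inl rfl)
        · rcases h with rfl | h
          · exact Or.inr (Or.inr (Or.inl rfl))
          · rcases h with rfl | h
            · exact Or.inr (Or.inr (Or.inr rfl))
            · rcases h with rfl | h
              · exact absurd rfl huv
              · simp at h
  obtain ⟨⟨hab, had, hae, hau⟩, ⟨hbd, hbe, hbu⟩, ⟨hde, hdu⟩, heu⟩ :
      (a ≠ b ∧ a ≠ d ∧ a ≠ e' ∧ a ≠ u) ∧ (b ≠ d ∧ b ≠ e' ∧ b ≠ u) ∧ (d ≠ e' ∧ d ≠ u) ∧ e' ≠ u := by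
    tauto
  rcases hvmem with rfl | rfl | rfl | rfl
  · exact absurd h1 hnadj
  · exact ⟨a, d, e', h1.symm, h2, h5.symm, h3, h4.symm, Ne.symm hae, Ne.symm had⟩
  · exact ⟨e', b, a, h5, h4.symm, h1, h3.symm, h2, hae, hbe⟩
  · exact absurd h5.symm hnadj

lemma no_two_common {S : Set V} (hS : IndepSet G S) (hsat : ¬ Saturates G S 4)
    {u v w x : V} (hu : u ∈ S) (hv : v ∈ S) (huv : u ≠ v) (hwx : w ≠ x)
    (h1 : G.Adj u w) (h2 : G.Adj v w) (h3 : G.Adj u x) (h4 : G.Adj v x) : False := by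
  have hwS : w ∉ S := fun h => hS hu h h1
  have hxS : x ∉ S := fun h => hS hu h h3
  have huw : u ≠ w := h1.ne
  have hvw : v ≠ w := h2.ne
  have hux : u ≠ x := h3.ne
  have hvx : v ≠ x := h4.ne
  have huv' := Ne.symm huv
  have hwx' := Ne.symm hwx
  have huw' := Ne.symm huw
  have hvw' := Ne.symm hvw
  have hux' := Ne.symm hux
  have hvx' := Ne.symm hvx
  set c : G.Walk u u :=
    Walk.cons h1 (Walk.cons h2.symm (Walk.cons h4 (Walk.cons h3.symm Walk.nil))) with hcdef
  apply hsat
  refine ⟨u, c, ⟨⟨⟨?_⟩, by simp [hcdef]⟩, ?_⟩, by simp [hcdef], ?_⟩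
  · -- edges nodup
    simp only [hcdef, Walk.edges_cons, Walk.edges_nil, List.nodup_cons, List.mem_cons,
      List.not_mem_nil, or_false, List.nodup_nil, and_true, Sym2.eq_iff]
    push_neg
    tauto
  · -- support tail nodup
    simp only [hcdef, Walk.support_cons, Walk.support_nil, List.tail_cons, List.nodup_cons,
      List.mem_cons, List.not_mem_nil, List.mem_singleton, or_false, List.nodup_nil, and_true]
    push_neg
    tauto
  · -- ncard
    have hset : S ∩ {y | y ∈ c.support} = {u, v} := by
      ext y
      simp only [hcdef, Walk.support_cons, Walk.support_nil, Set.mem_inter_iff,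
        Set.mem_setOf_eq, List.mem_cons, List.not_mem_nil, or_false, List.mem_singleton,
        Set.mem_insert_iff, Set.mem_singleton_iff]
      constructor
      · rintro ⟨hyS, rfl | rfl | rfl | rfl | rfl⟩
        · exact Or.inl rfl
        · exact absurd hyS hwS
        · exact Or.inr rfl
        · exact absurd hyS hxS
        · exact Or.inl rfl
      · rintro (rfl | rfl)
        · exact ⟨hu, Or.inl rfl⟩
        · exact ⟨hv, Or.inr (Or.inr (Or.inl rfl))⟩
    rw [hset]
    exact Set.ncard_pair huv

def Conf (G : SimpleGraph V) (u v : V) : Prop := u ≠ v ∧ ∃ (w : V) (c : G.Walk w w), c.IsCycle ∧ c.length = 5 ∧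
  u ∈ c.support ∧ v ∈ c.support
def part (G : SimpleGraph V) (x u : V) : Set V := {w | w = u ∨ (G.Adj u w ∧ w ≠ x)}
lemma Conf.symm {u v : V} (h : Conf G u v) : Conf G v u := by
  obtain ⟨hne, w, c, h1, h2, h3, h4⟩ := h
  exact ⟨hne.symm, w, c, h1, h2, h4, h3⟩

lemma part_mem_self (x u : V) : u ∈ part G x u := Or.inl rfl

lemma part_conn (x u : V) : (G.induce (part G x u)).Connected := by
  apply hub_connected (part_mem_self x u)
  rintro a (rfl | ⟨h, _⟩)
  · exact Or.inl rfl
  · exact Or.inr h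

section withS
variable {S : Set V} (hS : IndepSet G S) (hsat : ¬ Saturates G S 4)

include hS in
lemma part_inj {x u v : V} (hu : u ∈ S) (hv : v ∈ S)
    (h : part G x u = part G x v) : u = v := by
  by_contra hne
  have : u ∈ part G x v := h ▸ part_mem_self x u
  rcases this with h' | ⟨h', _⟩
  · exact hne h'
  · exact hS hv hu h'

include hS hsat in
lemma part_disj {x u v : V} (hu : u ∈ S) (hv : v ∈ S) (huv : u ≠ v)
    (hxu : G.Adj x u) (hxv : G.Adj x v) :
    Disjoint (part G x u) (part G x v) := by
  rw [Set.disjoint_left]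
  rintro w (rfl | ⟨h1, hwx⟩) hmem
  · rcases hmem with h' | ⟨h', _⟩
    · exact huv h'
    · exact hS hv hu h'
  · rcases hmem with rfl | ⟨h2, _⟩
    · exact hS hu hv h1
    · exact no_two_common hS hsat hu hv huv hwx h1 h2 hxu.symm hxv.symm

variable (G) in
noncomputable def Mx (T : Finset V) (x : V) : Finset (Set V) :=
  (T.filter (fun u => G.Adj x u)).image (part G x)

include hS hsat in
lemma Mx_good {T : Finset V} (hTS : ↑T ⊆ S) (x : V) : GoodM G (Mx G T x) := by
  constructor
  · intro A hA
    obtain ⟨u, _, rfl⟩ := Finset.mem_image.mp hA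
    exact part_conn x u
  · intro A hA B hB hAB
    obtain ⟨u, hu, rfl⟩ := Finset.mem_image.mp hA
    obtain ⟨v, hv, rfl⟩ := Finset.mem_image.mp hB
    have hu' := Finset.mem_filter.mp hu
    have hv' := Finset.mem_filter.mp hv
    have huv : u ≠ v := fun h => hAB (h ▸ rfl)
    exact part_disj hS hsat (hTS hu'.1) (hTS hv'.1) huv hu'.2 hv'.2


variable [Fintype V]

include hS hsat in
lemma count_per_x (hK5 : ¬ ∃ f : Fin 5 → Set V,
      (∀ w, (f w).Nonempty) ∧
      (∀ w, (G.induce (f w)).Connected) ∧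
      (∀ w₁ w₂, w₁ ≠ w₂ → Disjoint (f w₁) (f w₂)) ∧
      (∀ w₁ w₂, (⊤ : SimpleGraph (Fin 5)).Adj w₁ w₂ → ∃ v₁ ∈ f w₁, ∃ v₂ ∈ f w₂, G.Adj v₁ v₂))
    {T : Finset V} (hTS : ↑T ⊆ S) (x : V) :
    ∑ u ∈ T, (T.filter (fun v =>
        v ≠ u ∧ G.Adj x u ∧ G.Adj x v ∧ Touches G (part G x u) (part G x v))).card
      ≤ 8 * (T.filter (fun u => G.Adj x u)).card := by
  classical
  set Tx := T.filter (fun u => G.Adj x u) with hTx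
  have hzero : ∀ u ∈ T, u ∉ Tx → (T.filter (fun v =>
      v ≠ u ∧ G.Adj x u ∧ G.Adj x v ∧ Touches G (part G x u) (part G x v))).card = 0 := by
    intro u huT hun
    rw [Finset.card_eq_zero, Finset.filter_eq_empty_iff]
    intro v _
    intro hPv
    exact hun (Finset.mem_filter.mpr ⟨huT, hPv.2.1⟩)
  have hsum_eq : ∑ u ∈ Tx, (T.filter (fun v =>
        v ≠ u ∧ G.Adj x u ∧ G.Adj x v ∧ Touches G (part G x u) (part G x v))).card
      = ∑ u ∈ T, (T.filter (fun v =>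
        v ≠ u ∧ G.Adj x u ∧ G.Adj x v ∧ Touches G (part G x u) (part G x v))).card := by
    apply Finset.sum_subset (Finset.filter_subset _ _)
    intro u hu hun
    exact hzero u hu hun
  have hper : ∀ u ∈ Tx, (T.filter (fun v =>
      v ≠ u ∧ G.Adj x u ∧ G.Adj x v ∧ Touches G (part G x u) (part G x v))).card
      ≤ dd G (Mx G T x) (part G x u) := by
    intro u hu
    have huT := (Finset.mem_filter.mp hu).1
    rw [dd]
    apply Finset.card_le_card_of_injOn (fun v => part G x v)
    · intro v hv
      have h' := Finset.mem_filter.mp hv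
      obtain ⟨hvu, _, hxv, hTch⟩ := h'.2
      refine Finset.mem_filter.mpr ⟨Finset.mem_erase.mpr ⟨?_, ?_⟩, hTch⟩
      · intro hEq
        exact hvu (part_inj hS (hTS h'.1) (hTS huT) hEq)
      · exact Finset.mem_image.mpr ⟨v, Finset.mem_filter.mpr ⟨h'.1, hxv⟩, rfl⟩
    · intro v hv v' hv' hEq
      exact part_inj hS (hTS (Finset.mem_filter.mp hv).1) (hTS (Finset.mem_filter.mp hv').1) hEq
  have hde_le : de G (Mx G T x) ≤ 8 * Tx.card := by
    by_contra hcon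
    push_neg at hcon
    have himg : (Mx G T x).card ≤ Tx.card := Finset.card_image_le
    have hMx1 : 1 ≤ (Mx G T x).card := by
      by_contra h0
      push_neg at h0
      interval_cases h : (Mx G T x).card
      · have : Mx G T x = ∅ := Finset.card_eq_zero.mp h
        rw [de, this] at hcon
        simp at hcon
    have hthr : 2 ^ 3 * (Mx G T x).card ≤ de G (Mx G T x) := by
      have : (8 : ℕ) * (Mx G T x).card ≤ 8 * Tx.card := by omega
      omega
    exact hK5 (cliqueM_five_minor (mader 3 (Mx G T x) (Mx_good hS hsat hTS x) hMx1 hthr))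
  have hsum_dd : ∑ u ∈ Tx, dd G (Mx G T x) (part G x u) = de G (Mx G T x) := by
    rw [de, Mx, Finset.sum_image]
    intro v hv v' hv' hEq
    exact part_inj hS (hTS (Finset.mem_filter.mp hv).1) (hTS (Finset.mem_filter.mp hv').1) hEq
  calc ∑ u ∈ T, (T.filter (fun v =>
        v ≠ u ∧ G.Adj x u ∧ G.Adj x v ∧ Touches G (part G x u) (part G x v))).card
      = ∑ u ∈ Tx, (T.filter (fun v =>
        v ≠ u ∧ G.Adj x u ∧ G.Adj x v ∧ Touches G (part G x u) (part G x v))).card := hsum_eq.symm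
    _ ≤ ∑ u ∈ Tx, dd G (Mx G T x) (part G x u) := Finset.sum_le_sum hper
    _ = de G (Mx G T x) := hsum_dd
    _ ≤ 8 * Tx.card := hde_le


lemma deg_sum {T : Finset V} (hTS : ↑T ⊆ S) (hdeg6 : ∀ v ∈ S, G.degree v ≤ 6) :
    ∑ x : V, (T.filter (fun u => G.Adj x u)).card ≤ 6 * T.card := by
  have h2 : ∀ u ∈ T, (∑ x : V, if G.Adj x u then 1 else 0) ≤ 6 := by
    intro u hu
    rw [← Finset.card_filter]
    have heq : Finset.univ.filter (fun x => G.Adj x u) = G.neighborFinset u := by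
      ext w
      simp [SimpleGraph.mem_neighborFinset, adj_comm]
    rw [heq]
    exact hdeg6 u (hTS hu)
  calc ∑ x : V, (T.filter (fun u => G.Adj x u)).card
      = ∑ x : V, ∑ u ∈ T, (if G.Adj x u then 1 else 0) :=
        Finset.sum_congr rfl (fun x _ => Finset.card_filter _ _)
    _ = ∑ u ∈ T, ∑ x : V, (if G.Adj x u then 1 else 0) := Finset.sum_comm
    _ ≤ ∑ _u ∈ T, 6 := Finset.sum_le_sum h2
    _ = 6 * T.card := by rw [Finset.sum_const, smul_eq_mul, mul_comm]

include hS hsat in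
lemma conf_count (hdeg6 : ∀ v ∈ S, G.degree v ≤ 6)
    (hK5 : ¬ ∃ f : Fin 5 → Set V,
      (∀ w, (f w).Nonempty) ∧
      (∀ w, (G.induce (f w)).Connected) ∧
      (∀ w₁ w₂, w₁ ≠ w₂ → Disjoint (f w₁) (f w₂)) ∧
      (∀ w₁ w₂, (⊤ : SimpleGraph (Fin 5)).Adj w₁ w₂ → ∃ v₁ ∈ f w₁, ∃ v₂ ∈ f w₂, G.Adj v₁ v₂))
    {T : Finset V} (hTS : ↑T ⊆ S) :
    ∑ u ∈ T, (T.filter (fun v => Conf G u v)).card ≤ 48 * T.card := by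
  have stepA : ∀ u ∈ T, (T.filter (fun v => Conf G u v)).card
      ≤ ∑ x : V, (T.filter (fun v =>
        v ≠ u ∧ G.Adj x u ∧ G.Adj x v ∧ Touches G (part G x u) (part G x v))).card := by
    intro u hu
    have hsub : T.filter (fun v => Conf G u v) ⊆ Finset.univ.biUnion (fun x => T.filter (fun v =>
        v ≠ u ∧ G.Adj x u ∧ G.Adj x v ∧ Touches G (part G x u) (part G x v))) := by
      intro v hv
      have hvT := (Finset.mem_filter.mp hv).1
      obtain ⟨hne, w, c, hcyc, hlen, hus, hvs⟩ := (Finset.mem_filter.mp hv).2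
      have hnadj : ¬ G.Adj u v := hS (hTS hu) (hTS hvT)
      obtain ⟨x, y, z, hxu, hxv, huz, hvy, hzy, hzx, hyx⟩ :=
        five_cycle_struct hne hnadj hcyc hlen hus hvs
      refine Finset.mem_biUnion.mpr ⟨x, Finset.mem_univ x,
        Finset.mem_filter.mpr ⟨hvT, hne.symm, hxu, hxv, ?_⟩⟩
      exact ⟨z, Or.inr ⟨huz, hzx⟩, y, Or.inr ⟨hvy, hyx⟩, hzy⟩
    calc (T.filter (fun v => Conf G u v)).card
        ≤ (Finset.univ.biUnion (fun x => T.filter (fun v =>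
          v ≠ u ∧ G.Adj x u ∧ G.Adj x v ∧ Touches G (part G x u) (part G x v)))).card :=
          Finset.card_le_card hsub
      _ ≤ ∑ x : V, (T.filter (fun v =>
          v ≠ u ∧ G.Adj x u ∧ G.Adj x v ∧ Touches G (part G x u) (part G x v))).card :=
          Finset.card_biUnion_le
  calc ∑ u ∈ T, (T.filter (fun v => Conf G u v)).card
      ≤ ∑ u ∈ T, ∑ x : V, (T.filter (fun v =>
        v ≠ u ∧ G.Adj x u ∧ G.Adj x v ∧ Touches G (part G x u) (part G x v))).card :=
        Finset.sum_le_sum stepA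
    _ = ∑ x : V, ∑ u ∈ T, (T.filter (fun v =>
        v ≠ u ∧ G.Adj x u ∧ G.Adj x v ∧ Touches G (part G x u) (part G x v))).card :=
        Finset.sum_comm
    _ ≤ ∑ x : V, 8 * (T.filter (fun u => G.Adj x u)).card :=
        Finset.sum_le_sum (fun x _ => count_per_x hS hsat hK5 hTS x)
    _ = 8 * ∑ x : V, (T.filter (fun u => G.Adj x u)).card := by rw [Finset.mul_sum]
    _ ≤ 8 * (6 * T.card) := by
        have := deg_sum hTS hdeg6
        omega
    _ = 48 * T.card := by ring

include hS hsat in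
lemma greedy (hdeg6 : ∀ v ∈ S, G.degree v ≤ 6)
    (hK5 : ¬ ∃ f : Fin 5 → Set V,
      (∀ w, (f w).Nonempty) ∧
      (∀ w, (G.induce (f w)).Connected) ∧
      (∀ w₁ w₂, w₁ ≠ w₂ → Disjoint (f w₁) (f w₂)) ∧
      (∀ w₁ w₂, (⊤ : SimpleGraph (Fin 5)).Adj w₁ w₂ → ∃ v₁ ∈ f w₁, ∃ v₂ ∈ f w₂, G.Adj v₁ v₂)) :
    ∀ n : ℕ, ∀ T : Finset V, T.card = n → ↑T ⊆ S →
    ∃ I : Finset V, I ⊆ T ∧ (∀ a ∈ I, ∀ b ∈ I, ¬ Conf G a b) ∧ T.card ≤ 49 * I.card := by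
  intro n
  induction n using Nat.strong_induction_on with
  | _ n IH =>
    intro T hcard hTS
    rcases Finset.eq_empty_or_nonempty T with rfl | hne
    · exact ⟨∅, subset_rfl, by simp, by simp⟩
    · have hmin : ∃ u ∈ T, (T.filter (fun v => Conf G u v)).card ≤ 48 := by
        by_contra hc
        push_neg at hc
        have h1 : 49 * T.card ≤ ∑ u ∈ T, (T.filter (fun v => Conf G u v)).card := by
          calc 49 * T.card = ∑ _u ∈ T, 49 := by rw [Finset.sum_const, smul_eq_mul, mul_comm]
            _ ≤ ∑ u ∈ T, (T.filter (fun v => Conf G u v)).card :=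
              Finset.sum_le_sum (fun u hu => hc u hu)
        have h2 := conf_count hS hsat hdeg6 hK5 hTS
        have h3 : 1 ≤ T.card := Finset.card_pos.mpr hne
        omega
      obtain ⟨u, huT, hdeg48⟩ := hmin
      set D := insert u (T.filter (fun v => Conf G u v)) with hD
      set T' := T \ D with hT'
      have hT'sub : T' ⊆ T := Finset.sdiff_subset
      have huD : u ∈ D := Finset.mem_insert_self _ _
      have huT' : u ∉ T' := by
        rw [hT', Finset.mem_sdiff]
        tauto
      have hlt : T'.card < T.card := Finset.card_lt_card ⟨hT'sub, fun hsub => huT' (hsub huT)⟩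
      obtain ⟨I', hI'sub, hI'free, hI'card⟩ := IH T'.card (hcard ▸ hlt) T' rfl
        ((Finset.coe_subset.mpr hT'sub).trans hTS)
      have hnotconf : ∀ b' ∈ I', ¬ Conf G u b' := by
        intro b' hb' hconf
        have hbT' : b' ∈ T' := hI'sub hb'
        have hbD : b' ∈ D :=
          Finset.mem_insert.mpr (Or.inr (Finset.mem_filter.mpr ⟨hT'sub hbT', hconf⟩))
        exact (Finset.mem_sdiff.mp hbT').2 hbD
      refine ⟨insert u I', ?_, ?_, ?_⟩
      · exact Finset.insert_subset huT (hI'sub.trans hT'sub)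
      · intro a ha b hb
        rcases Finset.mem_insert.mp ha with ha1 | ha1
        · rcases Finset.mem_insert.mp hb with hb1 | hb1
          · intro hconf; exact hconf.1 (ha1.trans hb1.symm)
          · rw [ha1]; exact hnotconf b hb1
        · rcases Finset.mem_insert.mp hb with hb1 | hb1
          · rw [hb1]; intro hconf; exact hnotconf a ha1 hconf.symm
          · exact hI'free a ha1 b hb1
      · have hDcard : D.card ≤ 49 := by
          calc D.card ≤ (T.filter (fun v => Conf G u v)).card + 1 := Finset.card_insert_le _ _
            _ ≤ 49 := by omega
        have hsplit : T.card ≤ T'.card + D.card := by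
          rw [hT']
          exact Finset.card_le_card_sdiff_add_card
        have huI' : u ∉ I' := fun h => huT' (hI'sub h)
        rw [Finset.card_insert_of_notMem huI']
        omega

end withS

end infra
end PF

/-- Let `G` be a 4-connected planar triangulation and `S` an independent
set of vertices of degree at most 6 saturating no 4-cycle. Then there is `S' ⊆ S` of size
at least `|S|/541` saturating no 5-cycle of `G`. -/
theorem subset_saturating_no_five_cycle
    {V : Type} [Fintype V] (G : SimpleGraph V)
    (hG : IsPlanarTriangulation G) (h4 : KConnected 4 G)
    (S : Set V) (hS : IndepSet G S) (hdeg : ∀ u ∈ S, vdeg G u ≤ 6)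
    (hsat : ¬ Saturates G S 4) :
    ∃ S' ⊆ S, (S.ncard : ℝ) / 541 ≤ (S'.ncard : ℝ) ∧ ¬ Saturates G S' 5 := by
  classical
  have hK5 : ¬ HasMinor G (⊤ : SimpleGraph (Fin 5)) := hG.2.1.1
  have hdeg6 : ∀ v ∈ S, G.degree v ≤ 6 := by
    intro v hv
    have h := hdeg v hv
    have h1 : (G.neighborSet v).ncard = (G.neighborFinset v).card := by
      rw [SimpleGraph.neighborFinset_def, Set.ncard_eq_toFinset_card']
    have h2 : G.degree v = (G.neighborFinset v).card := rfl
    rw [vdeg, h1] at h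
    omega
  have hfin : S.Finite := S.toFinite
  have hcoe : (↑hfin.toFinset : Set V) = S := hfin.coe_toFinset
  obtain ⟨I, hIsub, hIfree, hIcard⟩ :=
    PF.greedy hS hsat hdeg6 hK5 hfin.toFinset.card hfin.toFinset rfl (by rw [hcoe])
  refine ⟨(↑I : Set V), ?_, ?_, ?_⟩
  · rw [← hcoe]
    exact_mod_cast Finset.coe_subset.mpr hIsub
  · have h1 : S.ncard = hfin.toFinset.card := Set.ncard_eq_toFinset_card S hfin
    have h2 : (↑I : Set V).ncard = I.card := Set.ncard_coe_finset I
    rw [h1, h2, div_le_iff₀ (by norm_num : (0:ℝ) < 541)]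
    have h3 : (hfin.toFinset.card : ℝ) ≤ 49 * I.card := by exact_mod_cast hIcard
    have h4 : (0:ℝ) ≤ (I.card : ℝ) := Nat.cast_nonneg _
    linarith
  · intro hsat5
    obtain ⟨w, c, hcyc, hlen, hn⟩ := hsat5
    obtain ⟨a, b, hab, habeq⟩ := Set.ncard_eq_two.mp hn
    have ha : a ∈ (↑I : Set V) ∩ {x | x ∈ c.support} := by rw [habeq]; exact Or.inl rfl
    have hb : b ∈ (↑I : Set V) ∩ {x | x ∈ c.support} := by rw [habeq]; exact Or.inr rfl
    exact hIfree a (by exact_mod_cast ha.1) b (by exact_mod_cast hb.1)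
      ⟨hab, w, c, hcyc, hlen, ha.2, hb.2⟩
end
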